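/- Let d ≥ 2 and let A₁,…,A_d be finite sets. Then the symmetric group on A₁ × ⋯ × A_d equals the product G₁G₂⋯G_{d-1}G_dG_{d-1}⋯G₁, where G_i is the subgroup of permutations that change only the i-th coordinate (i.e., π(a₁,…,a_d) agrees with (a₁,…,a_d) in every coordinate except possibly the i-th). -/

import Mathlib

open Finset


open Finset

section Transversal

variable {X B : Type*} [DecidableEq X] [DecidableEq B] [Fintype B]

lemma fiber_card_filter_mem (r : X → B) (s : Finset X) (m : ℕ)
    (hr : ∀ b, (s.filter fun x => r x = b).card = m) (V : Finset B) :
    (s.filter fun x => r x ∈ V).card = m * V.card := by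
  have h : (s.filter fun x => r x ∈ V) = V.biUnion (fun b => s.filter fun x => r x = b) := by
    ext x
    simp only [Finset.mem_filter, Finset.mem_biUnion]
    constructor
    · rintro ⟨hx, hv⟩; exact ⟨r x, hv, hx, rfl⟩
    · rintro ⟨b, hb, hx, rfl⟩; exact ⟨hx, hb⟩
  rw [h, Finset.card_biUnion]
  · simp [hr, mul_comm]
  · intro b _ b' _ hne
    simp only [Function.onFun]
    rw [Finset.disjoint_left]
    intro x hx hx'
    simp only [Finset.mem_filter] at hx hx'
    exact hne (hx.2 ▸ hx'.2 ▸ rfl)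

lemma common_transversal (p q : X → B) :
    ∀ (n : ℕ) (s : Finset X),
      (∀ b, (s.filter fun x => p x = b).card = n) →
      (∀ b, (s.filter fun x => q x = b).card = n) →
      ∃ c : X → ℕ, (∀ x ∈ s, c x < n) ∧
        (∀ x ∈ s, ∀ y ∈ s, c x = c y → p x = p y → x = y) ∧
        (∀ x ∈ s, ∀ y ∈ s, c x = c y → q x = q y → x = y) := by
  intro n
  induction n with
  | zero =>
    intro s hp _
    have hs : ∀ x, x ∉ s := by
      intro x hx
      have h0 := hp (p x)
      rw [Finset.card_eq_zero] at h0
      have hmem : x ∈ s.filter fun y => p y = p x := by simp [hx]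
      rw [h0] at hmem
      exact absurd hmem (Finset.notMem_empty x)
    exact ⟨fun _ => 0, fun x hx => absurd hx (hs x), fun x hx => absurd hx (hs x),
      fun x hx => absurd hx (hs x)⟩
  | succ n ih =>
    intro s hp hq
    set t : B → Finset B := fun b => (s.filter fun x => p x = b).image q with ht
    have hall : ∀ u : Finset B, u.card ≤ (u.biUnion t).card := by
      intro u
      have h1 : (s.filter fun x => p x ∈ u).card = (n+1) * u.card :=
        fiber_card_filter_mem p s (n+1) hp u
      have h2 : (s.filter fun x => q x ∈ u.biUnion t).card = (n+1) * (u.biUnion t).card :=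
        fiber_card_filter_mem q s (n+1) hq _
      have hsub : (s.filter fun x => p x ∈ u) ⊆ (s.filter fun x => q x ∈ u.biUnion t) := by
        intro x hx
        simp only [Finset.mem_filter] at hx ⊢
        refine ⟨hx.1, Finset.mem_biUnion.2 ⟨p x, hx.2, ?_⟩⟩
        exact Finset.mem_image.2 ⟨x, by simp [hx.1], rfl⟩
      have hc := Finset.card_le_card hsub
      rw [h1, h2] at hc
      exact Nat.le_of_mul_le_mul_left hc (Nat.succ_pos n)
    obtain ⟨F, hFinj, hFmem⟩ := (Finset.all_card_le_biUnion_card_iff_exists_injective t).1 hall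
    have hg : ∀ b, ∃ x, x ∈ s ∧ p x = b ∧ q x = F b := by
      intro b
      have hm := hFmem b
      rw [ht] at hm
      simp only [Finset.mem_image, Finset.mem_filter] at hm
      obtain ⟨x, ⟨hxs, hpx⟩, hqx⟩ := hm
      exact ⟨x, hxs, hpx, hqx⟩
    choose g hgs hgp hgq using hg
    have hFbij : Function.Bijective F := Finite.injective_iff_bijective.1 hFinj
    let E : B ≃ B := Equiv.ofBijective F hFbij
    set M : Finset X := Finset.univ.image g with hM
    have hmemM : ∀ x, x ∈ M ↔ ∃ b, g b = x := by simp [hM]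
    have hp' : ∀ b, ((s \ M).filter fun x => p x = b).card = n := by
      intro b
      have he : (s \ M).filter (fun x => p x = b) = (s.filter fun x => p x = b).erase (g b) := by
        ext x
        simp only [Finset.mem_filter, Finset.mem_sdiff, Finset.mem_erase, hmemM]
        constructor
        · rintro ⟨⟨hxs, hxM⟩, hpx⟩
          exact ⟨fun hxe => hxM ⟨b, hxe.symm⟩, hxs, hpx⟩
        · rintro ⟨hne, hxs, hpx⟩
          refine ⟨⟨hxs, ?_⟩, hpx⟩
          rintro ⟨b', rfl⟩
          rw [hgp b'] at hpx
          subst hpx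
          exact hne rfl
      rw [he, Finset.card_erase_of_mem (by simp [hgs, hgp]), hp b]
      omega
    have hq' : ∀ b, ((s \ M).filter fun x => q x = b).card = n := by
      intro b
      have hqg : q (g (E.symm b)) = b := by
        rw [hgq]
        exact E.apply_symm_apply b
      have he : (s \ M).filter (fun x => q x = b) = (s.filter fun x => q x = b).erase (g (E.symm b)) := by
        ext x
        simp only [Finset.mem_filter, Finset.mem_sdiff, Finset.mem_erase, hmemM]
        constructor
        · rintro ⟨⟨hxs, hxM⟩, hqx⟩
          exact ⟨fun hxe => hxM ⟨E.symm b, hxe.symm⟩, hxs, hqx⟩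
        · rintro ⟨hne, hxs, hqx⟩
          refine ⟨⟨hxs, ?_⟩, hqx⟩
          rintro ⟨b', rfl⟩
          rw [hgq b'] at hqx
          have : b' = E.symm b := by
            apply E.injective
            rw [E.apply_symm_apply]
            exact hqx
          subst this
          exact hne rfl
      rw [he, Finset.card_erase_of_mem (by simp [hgs, hqg]), hq b]
      omega
    obtain ⟨c', hlt', hpinj', hqinj'⟩ := ih (s \ M) hp' hq'
    refine ⟨fun x => if x ∈ M then n else c' x, ?_, ?_, ?_⟩
    · intro x hx
      by_cases hxM : x ∈ M
      · simp [hxM]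
      · simp only [hxM, if_false]
        exact Nat.lt_succ_of_lt (hlt' x (Finset.mem_sdiff.2 ⟨hx, hxM⟩))
    · intro x hx y hy hc hpe
      by_cases hxM : x ∈ M <;> by_cases hyM : y ∈ M <;>
        simp only [hxM, hyM, if_true, if_false] at hc
      · obtain ⟨b, rfl⟩ := (hmemM x).1 hxM
        obtain ⟨b', rfl⟩ := (hmemM y).1 hyM
        rw [hgp, hgp] at hpe
        rw [hpe]
      · exact absurd hc.symm (Nat.ne_of_lt (hlt' y (Finset.mem_sdiff.2 ⟨hy, hyM⟩)))
      · exact absurd hc (Nat.ne_of_lt (hlt' x (Finset.mem_sdiff.2 ⟨hx, hxM⟩)))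
      · exact hpinj' x (Finset.mem_sdiff.2 ⟨hx, hxM⟩) y (Finset.mem_sdiff.2 ⟨hy, hyM⟩) hc hpe
    · intro x hx y hy hc hqe
      by_cases hxM : x ∈ M <;> by_cases hyM : y ∈ M <;>
        simp only [hxM, hyM, if_true, if_false] at hc
      · obtain ⟨b, rfl⟩ := (hmemM x).1 hxM
        obtain ⟨b', rfl⟩ := (hmemM y).1 hyM
        rw [hgq, hgq] at hqe
        rw [hFinj hqe]
      · exact absurd hc.symm (Nat.ne_of_lt (hlt' y (Finset.mem_sdiff.2 ⟨hy, hyM⟩)))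
      · exact absurd hc (Nat.ne_of_lt (hlt' x (Finset.mem_sdiff.2 ⟨hx, hxM⟩)))
      · exact hqinj' x (Finset.mem_sdiff.2 ⟨hx, hxM⟩) y (Finset.mem_sdiff.2 ⟨hy, hyM⟩) hc hqe

end Transversal

lemma exists_middle_decomp {A B : Type*} [Finite A] [Finite B] (π : Equiv.Perm (A × B)) :
    ∃ h τ h' : Equiv.Perm (A × B),
      (∀ x, (h x).2 = x.2) ∧ (∀ x, (τ x).1 = x.1) ∧ (∀ x, (h' x).2 = x.2) ∧
      π = h * τ * h' := by
  classical
  cases nonempty_fintype A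
  cases nonempty_fintype B
  set n := Fintype.card A with hn
  have hp : ∀ b : B, ((Finset.univ : Finset (A × B)).filter fun x => x.2 = b).card = n := by
    intro b
    have he : (Finset.univ.filter fun x : A × B => x.2 = b)
        = Finset.univ.image (fun a : A => (a, b)) := by
      ext ⟨a, b'⟩
      simp only [Finset.mem_filter, Finset.mem_univ, true_and, Finset.mem_image]
      constructor
      · rintro rfl; exact ⟨a, rfl⟩
      · rintro ⟨a', ha⟩; exact (congrArg Prod.snd ha).symm
    rw [he, Finset.card_image_of_injective _ (fun a a' h => congrArg Prod.fst h)]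
    simp [hn]
  have hq : ∀ b : B, ((Finset.univ : Finset (A × B)).filter fun x => (π x).2 = b).card = n := by
    intro b
    have he : (Finset.univ.filter fun x : A × B => (π x).2 = b)
        = (Finset.univ.filter fun x : A × B => x.2 = b).image π.symm := by
      ext x
      simp only [Finset.mem_filter, Finset.mem_univ, true_and, Finset.mem_image]
      constructor
      · intro hx; exact ⟨π x, hx, π.symm_apply_apply x⟩
      · rintro ⟨y, hy, rfl⟩; rwa [π.apply_symm_apply]
    rw [he, Finset.card_image_of_injective _ π.symm.injective, hp b]
  obtain ⟨c, hclt, hcp, hcq⟩ := common_transversal Prod.snd (fun x => (π x).2) n Finset.univ hp hq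
  let eA := Fintype.equivFin A
  let cA : A × B → A := fun x => eA.symm ⟨c x, hclt x (Finset.mem_univ x)⟩
  have hcA : ∀ x y, cA x = cA y → c x = c y := by
    intro x y hxy
    exact congrArg Fin.val (eA.symm.injective hxy)
  have h'inj : Function.Injective (fun x : A × B => (cA x, x.2)) := by
    intro x y hxy
    simp only [Prod.mk.injEq] at hxy
    exact hcp x (Finset.mem_univ x) y (Finset.mem_univ y) (hcA _ _ hxy.1) hxy.2
  let h'p : Equiv.Perm (A × B) :=
    Equiv.ofBijective _ ((Finite.injective_iff_bijective).1 h'inj)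
  have hinj : Function.Injective (fun y : A × B => (cA (π.symm y), y.2)) := by
    intro x y hxy
    simp only [Prod.mk.injEq] at hxy
    have h2 : x.2 = y.2 := hxy.2
    have hq2 : (π (π.symm x)).2 = (π (π.symm y)).2 := by
      rw [π.apply_symm_apply, π.apply_symm_apply]; exact h2
    have := hcq (π.symm x) (Finset.mem_univ _) (π.symm y) (Finset.mem_univ _)
      (hcA _ _ hxy.1) hq2
    exact π.symm.injective this
  let hp' : Equiv.Perm (A × B) :=
    Equiv.ofBijective _ ((Finite.injective_iff_bijective).1 hinj)
  have hp'app : ∀ y, hp' y = (cA (π.symm y), y.2) := fun _ => rfl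
  have h'papp : ∀ x, h'p x = (cA x, x.2) := fun _ => rfl
  refine ⟨hp'⁻¹, hp' * π * h'p⁻¹, h'p, ?_, ?_, ?_, ?_⟩
  · intro x
    have := congrArg Prod.snd (hp'app (hp'⁻¹ x))
    rw [show hp' (hp'⁻¹ x) = x from hp'.apply_symm_apply x] at this
    exact this.symm ▸ rfl
  · intro x
    show (hp' (π (h'p⁻¹ x))).1 = x.1
    rw [hp'app, π.symm_apply_apply]
    show cA (h'p⁻¹ x) = x.1
    have := congrArg Prod.fst (h'papp (h'p⁻¹ x))
    rw [show h'p (h'p⁻¹ x) = x from h'p.apply_symm_apply x] at this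
    exact this.symm
  · intro x; rw [h'papp]
  · group

/-- Family of permutations of `B` indexed by `A`, as a permutation of `A × B`
fixing the first coordinate; a monoid hom. -/
def blockHom (A B : Type*) : (A → Equiv.Perm B) →* Equiv.Perm (A × B) where
  toFun g := Equiv.prodCongrRight g
  map_one' := Equiv.ext fun x => rfl
  map_mul' g1 g2 := Equiv.ext fun x => rfl

/-- Conjugation of permutations by an equivalence, as a monoid hom. -/
def conjHom {α β : Type*} (e : α ≃ β) : Equiv.Perm α →* Equiv.Perm β where
  toFun σ := e.permCongr σ
  map_one' := Equiv.ext fun x => by simp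
  map_mul' σ ρ := Equiv.ext fun x => by simp [Equiv.permCongr_apply]

universe u

lemma aux_decomp (d : ℕ) : ∀ (A : Fin (d+1) → Type u) [∀ i, Finite (A i)]
    (π : Equiv.Perm (∀ i, A i)),
    ∃ f : Fin (2*d+1) → Equiv.Perm (∀ i, A i),
      (∀ j : Fin (2*d+1), ∀ a : ∀ i, A i, ∀ i : Fin (d+1),
        (i : ℕ) ≠ min (j : ℕ) (2*d - (j : ℕ)) → f j a i = a i) ∧
      π = (List.ofFn f).prod := by
  induction d with
  | zero =>
    intro A _ π
    refine ⟨fun _ => π, ?_, by simp⟩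
    intro j a i hi
    exfalso
    have h1 := i.isLt
    have h2 := j.isLt
    omega
  | succ d ih =>
    intro A instA π
    rw [show 2*(d+1) = 2*d+2 by ring]
    haveI : ∀ i : Fin (d+1), Finite (A i.succ) := fun i => instA i.succ
    set Y := ∀ i : Fin (d+1), A i.succ with hY
    let E : A 0 × Y ≃ (∀ i, A i) := Fin.consEquiv A
    let Ψ : Equiv.Perm (A 0 × Y) →* Equiv.Perm (∀ i, A i) := conjHom E
    have hΨapp : ∀ σ a, Ψ σ a = E (σ (E.symm a)) := fun σ a => rfl
    let π' := E.symm.permCongr π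
    obtain ⟨h, τ, h', hh, hτ, hh', hfact⟩ := exists_middle_decomp π'
    have hτsymm1 : ∀ x, (τ.symm x).1 = x.1 := by
      intro x
      conv_rhs => rw [← τ.apply_symm_apply x]
      exact (hτ _).symm
    let τf : A 0 → Equiv.Perm Y := fun a =>
      { toFun := fun y => (τ (a, y)).2
        invFun := fun y => (τ.symm (a, y)).2
        left_inv := fun y => by
          have h1 : (a, (τ (a, y)).2) = τ (a, y) := Prod.ext (hτ (a, y)).symm rfl
          show (τ.symm (a, (τ (a, y)).2)).2 = y
          rw [h1, τ.symm_apply_apply]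
        right_inv := fun y => by
          have h1 : (a, (τ.symm (a, y)).2) = τ.symm (a, y) :=
            Prod.ext (hτsymm1 (a, y)).symm rfl
          show (τ (a, (τ.symm (a, y)).2)).2 = y
          rw [h1, τ.apply_symm_apply] }
    have hτeq : τ = Equiv.prodCongrRight τf := by
      apply Equiv.ext
      rintro ⟨a, y⟩
      exact (Prod.ext (hτ (a, y)) rfl)
    choose f hf1 hf2 using fun a => ih (fun i => A i.succ) (τf a)
    let Φ : (A 0 → Equiv.Perm Y) →* Equiv.Perm (A 0 × Y) := blockHom (A 0) Y
    let g : Fin (2*d+1) → (A 0 → Equiv.Perm Y) := fun j a => f a j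
    have hgprod : τf = (List.ofFn g).prod := by
      funext a
      rw [Pi.list_prod_apply, List.map_ofFn]
      exact hf2 a
    let mid : Fin (2*d+1) → Equiv.Perm (∀ i, A i) := fun j => Ψ (Φ (g j))
    have hmidprod : (List.ofFn mid).prod = Ψ τ := by
      have h1 : List.ofFn mid = (List.ofFn g).map (Ψ.comp Φ) := by
        rw [List.map_ofFn]; rfl
      rw [h1, ← map_list_prod (Ψ.comp Φ), ← hgprod]
      show Ψ (Φ τf) = Ψ τ
      congr 1
      rw [hτeq]; rfl
    -- the two helper evaluation lemmas
    have hΨouter : ∀ (σ : Equiv.Perm (A 0 × Y)), (∀ x, (σ x).2 = x.2) →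
        ∀ (a : ∀ i, A i) (i : Fin (d+1+1)), (i : ℕ) ≠ 0 → Ψ σ a i = a i := by
      intro σ hσ a i hi
      have hx2 : (σ (E.symm a)).2 = fun r : Fin (d+1) => a r.succ := by
        rw [hσ]
        rfl
      have hval : Ψ σ a = Fin.cons (σ (E.symm a)).1 (σ (E.symm a)).2 := rfl
      induction i using Fin.cases with
      | zero => simp at hi
      | succ k =>
        rw [hval, Fin.cons_succ, hx2]
    have hΨmid : ∀ (w : A 0 → Equiv.Perm Y) (a : ∀ i, A i) (i : Fin (d+1+1)) (m : ℕ),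
        (∀ b y (l : Fin (d+1)), (l : ℕ) ≠ m → w b y l = y l) →
        (i : ℕ) ≠ m + 1 → Ψ (Φ w) a i = a i := by
      intro w a i m hw hi
      have hval : Ψ (Φ w) a
          = Fin.cons ((Φ w) (E.symm a)).1 ((Φ w) (E.symm a)).2 := rfl
      have hfst : ((Φ w) (E.symm a)).1 = a 0 := rfl
      have hsnd : ((Φ w) (E.symm a)).2 = w (a 0) (fun r : Fin (d+1) => a r.succ) := rfl
      revert hi
      induction i using Fin.cases with
      | zero =>
        intro _
        rw [hval, Fin.cons_zero, hfst]
      | succ k =>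
        intro hk
        rw [hval, Fin.cons_succ, hsnd, hw]
        rw [Fin.val_succ] at hk
        omega
    -- the factor family
    let F : Fin (2*d+2+1) → Equiv.Perm (∀ i, A i) := fun j =>
      if _ : (j : ℕ) = 0 then Ψ h
      else if hjt : (j : ℕ) ≤ 2*d+1 then mid ⟨(j : ℕ) - 1, by omega⟩
      else Ψ h'
    refine ⟨F, ?_, ?_⟩
    · intro j a i hi
      by_cases hj0 : (j : ℕ) = 0
      · have : F j = Ψ h := by
          simp only [F]
          rw [dif_pos hj0]
        rw [this]
        exact hΨouter h hh a i (by omega)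
      · by_cases hjt : (j : ℕ) ≤ 2*d+1
        · have : F j = mid ⟨(j : ℕ) - 1, by omega⟩ := by
            simp only [F]
            rw [dif_neg hj0, dif_pos hjt]
          rw [this]
          refine hΨmid (g ⟨(j : ℕ) - 1, by omega⟩) a i
            (min ((j : ℕ) - 1) (2*d - ((j : ℕ) - 1))) ?_ ?_
          · intro b y l hl
            exact hf1 b _ y l hl
          · have hjlt := j.isLt
            omega
        · have : F j = Ψ h' := by
            simp only [F]
            rw [dif_neg hj0, dif_neg hjt]
          rw [this]
          have hjlt := j.isLt
          exact hΨouter h' hh' a i (by omega)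
    · have hFL : List.ofFn F = Ψ h :: (List.ofFn mid ++ [Ψ h']) := by
        apply List.ext_getElem
        · simp
        · intro k hk1 hk2
          rw [List.getElem_ofFn]
          match k, hk1, hk2 with
          | 0, _, _ => simp [F]
          | (k+1), hk1, hk2 =>
            rw [List.getElem_cons_succ]
            have hklt : k + 1 < 2*d+2+1 := by
              simpa using hk1
            by_cases hkt : k + 1 ≤ 2*d+1
            · rw [List.getElem_append_left (by simp; omega)]
              rw [List.getElem_ofFn]
              show F ⟨k+1, hklt⟩ = _
              have : F ⟨k+1, hklt⟩ = mid ⟨k+1-1, by omega⟩ := by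
                simp only [F]
                rw [dif_neg (by simp), dif_pos (by simpa using hkt)]
              rw [this]
              congr 1
            · have hke : k = 2*d+1 := by
                simp at hk2
                omega
              subst hke
              rw [List.getElem_append_right (by simp)]
              show F ⟨2*d+1+1, hklt⟩ = _
              have : F ⟨2*d+1+1, hklt⟩ = Ψ h' := by
                simp only [F]
                rw [dif_neg (by simp), dif_neg (by simp)]
              rw [this]
              simp
      rw [hFL, List.prod_cons, List.prod_append, List.prod_singleton, hmidprod]
      have hπ : π = Ψ π' := by
        apply Equiv.ext
        intro a
        show π a = E (π' (E.symm a))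
        show π a = E (E.symm (π (E.symm.symm (E.symm a))))
        simp
      rw [hπ, hfact]
      rw [map_mul, map_mul]
      group


/-- For `d ≥ 2` and finite sets `A₁,…,A_d`, every permutation of
`A₁ × ⋯ × A_d` is a product of `2d − 1` permutations `g₁ g₂ ⋯ g_{d-1} g_d g_{d-1} ⋯ g₁`,
where the `j`-th factor changes only the coordinate `min j (2d-2-j)` (0-indexed), i.e. one
factor from each of `G₁,…,G_{d-1},G_d,G_{d-1},…,G₁` in that order. -/
theorem sym_pi_decomposition (d : ℕ) (hd : 2 ≤ d) (A : Fin d → Type*)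
    [∀ i, Finite (A i)] (π : Equiv.Perm (∀ i, A i)) :
    ∃ f : Fin (2 * d - 1) → Equiv.Perm (∀ i, A i),
      (∀ j : Fin (2 * d - 1), ∀ a : ∀ i, A i, ∀ i : Fin d,
        (i : ℕ) ≠ min (j : ℕ) (2 * d - 2 - (j : ℕ)) → f j a i = a i) ∧
      π = (List.ofFn f).prod := by
  obtain ⟨d', rfl⟩ : ∃ d', d = d' + 1 := ⟨d - 1, by omega⟩
  rw [show 2 * (d' + 1) - 1 = 2 * d' + 1 by omega, show 2 * (d' + 1) - 2 = 2 * d' by omega]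
  exact aux_decomp d' A π
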